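/- Let Γ be a countable discrete group having Property (T_{ℓ_p}) for some real number p with 1 < p < ∞ and p ≠ 2. Then Γ has Lubotzky's Property (τ). -/

import Mathlib

open scoped ENNReal Pointwise
open Filter MeasureTheory

noncomputable section

/-- The conjugate exponent `q` of `p`, i.e. the solution of `1/p + 1/q = 1` in `ℝ≥0∞`. -/
def conjExp (p : ℝ≥0∞) : ℝ≥0∞ := (1 - p⁻¹)⁻¹

/-- The canonical pairing between `ℓ_q` and `ℓ_p`: `⟨φ, f⟩ = ∑ₓ φ(x) f(x)`. -/
def dualPair {X : Type*} (φ f : X → ℂ) : ℂ := ∑' x, φ x * f x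

/-- An orthogonal representation of a topological group `G` on `ℓ_p = ℓ_p(ℕ, ℂ)`:
a homomorphism into the group of surjective linear isometries of `ℓ_p` which is strongly
continuous. -/
structure OrthRep (G : Type*) [Group G] [TopologicalSpace G] (p : ℝ≥0∞) [Fact (1 ≤ p)] where
  toFun : G →* (lp (fun _ : ℕ => ℂ) p ≃ₗᵢ[ℂ] lp (fun _ : ℕ => ℂ) p)
  continuous_apply : ∀ f : lp (fun _ : ℕ => ℂ) p, Continuous fun g => toFun g f

/-- `φ ∈ ℓ_q` is an invariant vector for the dual representation `π*` on `ℓ_q`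
(where `π*(g) = (π(g⁻¹))ᵀ`), i.e. `⟨φ, π(g) f⟩ = ⟨φ, f⟩` for all `g` and `f`. -/
def OrthRep.DualInvariant {G : Type*} [Group G] [TopologicalSpace G] {p : ℝ≥0∞}
    [Fact (1 ≤ p)] (π : OrthRep G p) (φ : ℕ → ℂ) : Prop :=
  Memℓp φ (conjExp p) ∧
    ∀ (g : G) (f : lp (fun _ : ℕ => ℂ) p), dualPair φ (π.toFun g f) = dualPair φ f

/-- `ℓ'_p(π)`: the annihilator in `ℓ_p` of the subspace of `π*(G)`-invariant vectors
of `ℓ_q`. -/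
def OrthRep.ann {G : Type*} [Group G] [TopologicalSpace G] {p : ℝ≥0∞}
    [Fact (1 ≤ p)] (π : OrthRep G p) : Set (lp (fun _ : ℕ => ℂ) p) :=
  {f | ∀ φ : ℕ → ℂ, π.DualInvariant φ → dualPair φ f = 0}

/-- There is a sequence of almost invariant unit vectors for `π` lying in the subset `S`:
unit vectors `f_n ∈ S` with `lim_n sup_{g ∈ Q} ‖π(g) f_n - f_n‖ = 0` for every compact
`Q ⊆ G`. -/
def OrthRep.HasAlmostInvariantSeq {G : Type*} [Group G] [TopologicalSpace G] {p : ℝ≥0∞}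
    [Fact (1 ≤ p)] (π : OrthRep G p) (S : Set (lp (fun _ : ℕ => ℂ) p)) : Prop :=
  ∃ f : ℕ → lp (fun _ : ℕ => ℂ) p, (∀ n, f n ∈ S) ∧ (∀ n, ‖f n‖ = 1) ∧
    ∀ Q : Set G, IsCompact Q → ∀ ε : ℝ, 0 < ε →
      ∃ N : ℕ, ∀ n ≥ N, ∀ g ∈ Q, ‖π.toFun g (f n) - f n‖ < ε

/-- Property `(T_{ℓ_p})` for a topological group `G`: no orthogonal representation of `G`
on `ℓ_p` admits a sequence of almost invariant unit vectors in `ℓ'_p(π)`. -/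
def HasPropertyTlp (G : Type*) [Group G] [TopologicalSpace G] (p : ℝ) : Prop :=
  ∀ [Fact (1 ≤ ENNReal.ofReal p)],
    ∀ π : OrthRep G (ENNReal.ofReal p), ¬ π.HasAlmostInvariantSeq π.ann

/-- Composing with a permutation of the index set and multiplying with a function of
modulus one preserves membership in `ℓ_p`. -/
theorem Memℓp.twist {X : Type*} {p : ℝ≥0∞} (e : Equiv.Perm X) {h : X → ℂ}
    (hh : ∀ x, ‖h x‖ = 1) {f : X → ℂ} (hf : Memℓp f p) :
    Memℓp (fun x => h x * f (e x)) p := by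
  have hnorm : ∀ x, ‖h x * f (e x)‖ = ‖f (e x)‖ := fun x => by
    rw [norm_mul, hh x, one_mul]
  rcases ENNReal.trichotomy p with rfl | rfl | hp
  · rw [memℓp_zero_iff] at hf ⊢
    have hsub : {x | h x * f (e x) ≠ 0} ⊆ e ⁻¹' {y | f y ≠ 0} := by
      intro x hx
      simp only [Set.mem_preimage, Set.mem_setOf_eq]
      intro h0
      exact hx (by simp [h0])
    exact (hf.preimage e.injective.injOn).subset hsub
  · rw [memℓp_infty_iff] at hf ⊢
    obtain ⟨C, hC⟩ := hf
    refine ⟨C, ?_⟩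
    rintro r ⟨x, rfl⟩
    show ‖h x * f (e x)‖ ≤ C
    rw [hnorm x]
    exact hC ⟨e x, rfl⟩
  · rw [memℓp_gen_iff hp] at hf ⊢
    have hs : Summable ((fun y => ‖f y‖ ^ p.toReal) ∘ e) :=
      (Equiv.summable_iff e).mpr hf
    refine hs.congr fun x => ?_
    simp only [Function.comp_apply]
    rw [hnorm x]

/-- The permutation representation of `G` on `ℓ_2(X)` twisted by the cocycle `c`:
`(λ_X^c(g) f)(x) = c(g⁻¹, x) f(g⁻¹ x)`. -/
def twistedL2 {G X : Type*} [Group G] [MulAction G X] (c : G → X → ℂ)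
    (hc : ∀ g x, ‖c g x‖ = 1) (g : G) (f : lp (fun _ : X => ℂ) 2) :
    lp (fun _ : X => ℂ) 2 :=
  ⟨fun x => c g⁻¹ x * f (g⁻¹ • x),
    (lp.memℓp f).twist (MulAction.toPerm (g⁻¹ : G)) (fun x => hc g⁻¹ x)⟩

/-- The (untwisted) permutation representation of `G` on `ℓ_2(X)`:
`(λ_X(g) f)(x) = f(g⁻¹ x)`. -/
def permL2 {G X : Type*} [Group G] [MulAction G X] (g : G) (f : lp (fun _ : X => ℂ) 2) :
    lp (fun _ : X => ℂ) 2 :=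
  twistedL2 (fun _ _ => 1) (fun _ _ => norm_one) g f

/-- Lubotzky's Property `(τ)` for a discrete group `Γ`: there are a finite `Q ⊆ Γ` and
`ε > 0` such that for every finite-index subgroup `H ≤ Γ` and every `f ∈ ℓ_2(Γ/H)`
orthogonal to the constant functions, `max_{g ∈ Q} ‖λ_{Γ/H}(g) f - f‖ ≥ ε ‖f‖`. -/
def PropertyTau (Γ : Type*) [Group Γ] : Prop :=
  ∃ (Q : Finset Γ) (ε : ℝ), 0 < ε ∧
    ∀ H : Subgroup Γ, H.FiniteIndex →
      ∀ f : lp (fun _ : Γ ⧸ H => ℂ) 2,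
        (∀ f₀ : lp (fun _ : Γ ⧸ H => ℂ) 2, (∀ x y : Γ ⧸ H, f₀ x = f₀ y) →
          inner ℂ f₀ f = (0 : ℂ)) →
        ∃ g ∈ Q, ε * ‖f‖ ≤ ‖permL2 g f - f‖


set_option linter.unusedSectionVars false
section TlpAuxSection
namespace TlpAux


open Real

/-- signed power map -/
def mz (γ t : ℝ) : ℝ := Real.sign t * |t| ^ γ

lemma mz_zero (γ : ℝ) : mz γ 0 = 0 := by simp [mz]

lemma mz_neg (γ t : ℝ) : mz γ (-t) = - mz γ t := by
  simp [mz, Real.sign_neg, abs_neg, neg_mul]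

lemma mz_of_nonneg {t : ℝ} (ht : 0 ≤ t) {γ : ℝ} (hγ : 0 < γ) : mz γ t = t ^ γ := by
  rcases eq_or_lt_of_le ht with h | h
  · simp [mz, ← h, Real.zero_rpow hγ.ne']
  · simp [mz, Real.sign_of_pos h, abs_of_pos h]

lemma abs_mz (γ t : ℝ) (hγ : 0 < γ) : |mz γ t| = |t| ^ γ := by
  rcases lt_trichotomy t 0 with h | h | h
  · simp [mz, Real.sign_of_neg h, abs_mul, abs_of_nonneg (Real.rpow_nonneg (abs_nonneg t) γ)]
  · simp [h, mz, Real.zero_rpow hγ.ne']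
  · simp [mz, Real.sign_of_pos h, abs_of_nonneg (Real.rpow_nonneg (abs_nonneg t) γ)]

lemma mz_pos_val {t : ℝ} (h : 0 < t) (γ : ℝ) : mz γ t = t ^ γ := by
  simp [mz, Real.sign_of_pos h, abs_of_pos h]

lemma mz_neg_val {t : ℝ} (h : t < 0) (γ : ℝ) : mz γ t = -((-t) ^ γ) := by
  simp [mz, Real.sign_of_neg h, abs_of_neg h]

lemma mz_comp (γ γ' t : ℝ) (hγ : 0 < γ) (hγ' : 0 < γ') :
    mz γ (mz γ' t) = mz (γ' * γ) t := by
  rcases lt_trichotomy t 0 with h | h | h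
  · have hpos : (0:ℝ) < (-t) ^ γ' := Real.rpow_pos_of_pos (by linarith) _
    rw [mz_neg_val h γ', mz_neg_val h (γ' * γ), mz_neg, mz_pos_val hpos γ,
      ← Real.rpow_mul (by linarith : (0:ℝ) ≤ -t)]
  · simp [h, mz_zero, mz, Real.zero_rpow hγ.ne', Real.zero_rpow (by positivity : γ' * γ ≠ 0)]
  · rw [mz_pos_val h γ', mz_pos_val (Real.rpow_pos_of_pos h γ') γ, mz_pos_val h (γ' * γ),
      ← Real.rpow_mul h.le]

lemma mz_one (t : ℝ) : mz 1 t = t := by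
  rcases lt_trichotomy t 0 with h | h | h
  · simp [mz, Real.sign_of_neg h, abs_of_neg h]
  · simp [h, mz]
  · simp [mz, Real.sign_of_pos h, abs_of_pos h]

/-- subadditivity of rpow for exponents ≤ 1 -/
lemma rpow_add_le {x y γ : ℝ} (hx : 0 ≤ x) (hy : 0 ≤ y) (hγ0 : 0 ≤ γ) (hγ1 : γ ≤ 1) :
    (x + y) ^ γ ≤ x ^ γ + y ^ γ := by
  have := NNReal.rpow_add_le_add_rpow (⟨x, hx⟩ : NNReal) (⟨y, hy⟩ : NNReal) hγ0 hγ1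
  have h2 := NNReal.coe_le_coe.mpr this
  push_cast [NNReal.coe_rpow] at h2
  exact h2

/-- key monotone case for γ ≤ 1 -/
lemma mz_sub_le_of_le {γ : ℝ} (hγ0 : 0 < γ) (hγ1 : γ ≤ 1) {a b : ℝ} (hb : 0 ≤ b) (hba : b ≤ a) :
    |mz γ a - mz γ b| ≤ |a - b| ^ γ := by
  have ha : 0 ≤ a := hb.trans hba
  rw [mz_of_nonneg ha hγ0, mz_of_nonneg hb hγ0]
  have h1 : a ^ γ - b ^ γ ≤ (a - b) ^ γ := by
    have := rpow_add_le (sub_nonneg.mpr hba) hb hγ0.le hγ1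
    rw [sub_add_cancel] at this
    linarith
  have h2 : 0 ≤ a ^ γ - b ^ γ := by
    have := Real.rpow_le_rpow hb hba hγ0.le
    linarith
  rw [abs_of_nonneg h2, abs_of_nonneg (by linarith : (0:ℝ) ≤ a - b)]
  exact h1

/-- pointwise Mazur estimate, Hölder case (γ ≤ 1) -/
lemma mz_sub_abs_le {γ : ℝ} (hγ0 : 0 < γ) (hγ1 : γ ≤ 1) (a b : ℝ) :
    |mz γ a - mz γ b| ≤ 2 * |a - b| ^ γ := by
  have key : ∀ a b : ℝ, 0 ≤ b → b ≤ a → |mz γ a - mz γ b| ≤ 2 * |a - b| ^ γ := by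
    intro a b hb hba
    have := mz_sub_le_of_le hγ0 hγ1 hb hba
    nlinarith [Real.rpow_nonneg (abs_nonneg (a - b)) γ]
  have keyo : ∀ a b : ℝ, 0 ≤ a → b < 0 → |mz γ a - mz γ b| ≤ 2 * |a - b| ^ γ := by
    intro a b ha hb
    have hab : 0 < a - b := by linarith
    have h1 : mz γ a - mz γ b = a ^ γ + (-b) ^ γ := by
      rw [mz_of_nonneg ha hγ0, show b = -(-b) by ring, mz_neg,
        mz_of_nonneg (by linarith : (0:ℝ) ≤ -b) hγ0]
      ring
    have h2 : a ^ γ ≤ (a - b) ^ γ := Real.rpow_le_rpow ha (by linarith) hγ0.le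
    have h3 : (-b) ^ γ ≤ (a - b) ^ γ := Real.rpow_le_rpow (by linarith) (by linarith) hγ0.le
    have h4 : 0 ≤ a ^ γ + (-b) ^ γ := by
      have := Real.rpow_nonneg ha γ
      have := Real.rpow_nonneg (by linarith : (0:ℝ) ≤ -b) γ
      linarith
    rw [h1, abs_of_nonneg h4, abs_of_pos hab]
    linarith
  have key2 : ∀ a b : ℝ, 0 ≤ a → 0 ≤ b → |mz γ a - mz γ b| ≤ 2 * |a - b| ^ γ := by
    intro a b ha hb
    rcases le_total b a with h | h
    · exact key a b hb h
    · rw [abs_sub_comm, abs_sub_comm a b]; exact key b a ha h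
  rcases le_or_gt 0 a with ha | ha <;> rcases le_or_gt 0 b with hb | hb
  · exact key2 a b ha hb
  · exact keyo a b ha hb
  · rw [abs_sub_comm, abs_sub_comm a b]; exact keyo b a hb ha
  · have := key2 (-a) (-b) (by linarith) (by linarith)
    rw [show -a - -b = -(a - b) by ring, abs_neg] at this
    rw [show mz γ a - mz γ b = -(mz γ (-a) - mz γ (-b)) by rw [mz_neg, mz_neg]; ring, abs_neg]
    exact this


open Real

variable {γ : ℝ}

/-- Bernoulli-type: for `1 ≤ γ` and `0 ≤ b ≤ a`, `a^γ - b^γ ≤ γ a^{γ-1} (a-b)`. -/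
lemma rpow_sub_rpow_le (hγ : 1 ≤ γ) {a b : ℝ} (hb : 0 ≤ b) (hba : b ≤ a) :
    a ^ γ - b ^ γ ≤ γ * a ^ (γ - 1) * (a - b) := by
  rcases eq_or_lt_of_le (hb.trans hba) with h | h
  · have hb0 : b = 0 := le_antisymm (hba.trans h.symm.le) hb
    simp [← h, hb0, Real.zero_rpow (by linarith : γ ≠ 0)]
  · -- a > 0
    have hs : -1 ≤ b / a - 1 := by
      have : 0 ≤ b / a := div_nonneg hb h.le
      linarith
    have hber := _root_.one_add_mul_self_le_rpow_one_add hs hγ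
    rw [show 1 + (b / a - 1) = b / a by ring] at hber
    have hba' : (b / a) ^ γ = b ^ γ / a ^ γ := Real.div_rpow hb h.le γ
    rw [hba'] at hber
    have hapos : (0:ℝ) < a ^ γ := Real.rpow_pos_of_pos h γ
    have h2 := mul_le_mul_of_nonneg_right hber hapos.le
    rw [div_mul_cancel₀ _ hapos.ne'] at h2
    -- done
    -- h2 : (1 + γ * (b/a - 1)) * a ^ γ ≤ b ^ γ
    have h3 : a ^ γ * (b / a) = a ^ (γ - 1) * b := by
      rw [Real.rpow_sub h, Real.rpow_one]
      field_simp
    have h4 : a ^ (γ - 1) * a = a ^ γ := by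
      rw [Real.rpow_sub h, Real.rpow_one, div_mul_cancel₀ _ h.ne']
    nlinarith [Real.rpow_nonneg (hb.trans hba) (γ - 1)]

/-- pointwise Mazur estimate, Lipschitz case (γ ≥ 1) -/
lemma mz_sub_abs_le' (hγ : 1 ≤ γ) (a b : ℝ) :
    |mz γ a - mz γ b| ≤ γ * (|a| ^ (γ - 1) + |b| ^ (γ - 1)) * |a - b| := by
  have hγ0 : (0:ℝ) < γ := by linarith
  have key : ∀ a b : ℝ, 0 ≤ b → b ≤ a →
      |mz γ a - mz γ b| ≤ γ * (|a| ^ (γ - 1) + |b| ^ (γ - 1)) * |a - b| := by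
    intro a b hb hba
    have ha : 0 ≤ a := hb.trans hba
    rw [mz_of_nonneg ha hγ0, mz_of_nonneg hb hγ0, abs_of_nonneg ha, abs_of_nonneg hb,
      abs_of_nonneg (by linarith : (0:ℝ) ≤ a - b)]
    have h1 := rpow_sub_rpow_le hγ hb hba
    have h2 : 0 ≤ a ^ γ - b ^ γ := by
      have := Real.rpow_le_rpow hb hba hγ0.le
      linarith
    rw [abs_of_nonneg h2]
    have h3 : γ * a ^ (γ - 1) * (a - b) ≤ γ * (a ^ (γ - 1) + b ^ (γ - 1)) * (a - b) := by
      have h6 := Real.rpow_nonneg hb (γ - 1)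
      nlinarith [mul_nonneg (mul_nonneg hγ0.le (sub_nonneg.mpr hba)) h6]
    linarith
  have keyo : ∀ a b : ℝ, 0 ≤ a → b < 0 →
      |mz γ a - mz γ b| ≤ γ * (|a| ^ (γ - 1) + |b| ^ (γ - 1)) * |a - b| := by
    intro a b ha hb
    have hab : 0 < a - b := by linarith
    have h1 : mz γ a - mz γ b = a ^ γ + (-b) ^ γ := by
      rw [mz_of_nonneg ha hγ0, show b = -(-b) by ring, mz_neg,
        mz_of_nonneg (by linarith : (0:ℝ) ≤ -b) hγ0]
      ring
    have e1 : a ^ γ ≤ a ^ (γ - 1) * (a - b) := by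
      rcases eq_or_lt_of_le ha with h | h
      · rw [← h, Real.zero_rpow (by linarith : γ ≠ 0)]
        have : (0:ℝ) ≤ (0:ℝ) ^ (γ - 1) := Real.rpow_nonneg le_rfl _
        nlinarith
      · rw [show γ = γ - 1 + 1 by ring, Real.rpow_add h, Real.rpow_one,
          show γ - 1 + 1 - 1 = γ - 1 by ring]
        have : 0 ≤ a ^ (γ - 1) := Real.rpow_nonneg ha _
        nlinarith
    have e2 : (-b) ^ γ ≤ (-b) ^ (γ - 1) * (a - b) := by
      rw [show γ = γ - 1 + 1 by ring, Real.rpow_add (by linarith : (0:ℝ) < -b), Real.rpow_one,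
        show γ - 1 + 1 - 1 = γ - 1 by ring]
      have : 0 ≤ (-b) ^ (γ - 1) := Real.rpow_nonneg (by linarith) _
      nlinarith
    have h4 : 0 ≤ a ^ γ + (-b) ^ γ := by
      have := Real.rpow_nonneg ha γ
      have := Real.rpow_nonneg (by linarith : (0:ℝ) ≤ -b) γ
      linarith
    rw [h1, abs_of_nonneg h4, abs_of_pos hab, abs_of_nonneg ha, abs_of_neg hb]
    have h5 : a ^ (γ - 1) * (a - b) + (-b) ^ (γ - 1) * (a - b) ≤
        γ * ((a ^ (γ - 1) + (-b) ^ (γ - 1)) * (a - b)) := by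
      have n1 : 0 ≤ a ^ (γ - 1) := Real.rpow_nonneg ha _
      have n2 : 0 ≤ (-b) ^ (γ - 1) := Real.rpow_nonneg (by linarith) _
      nlinarith
    calc a ^ γ + (-b) ^ γ ≤ a ^ (γ - 1) * (a - b) + (-b) ^ (γ - 1) * (a - b) := by linarith
    _ ≤ γ * ((a ^ (γ - 1) + (-b) ^ (γ - 1)) * (a - b)) := h5
    _ = γ * (a ^ (γ - 1) + (-b) ^ (γ - 1)) * (a - b) := by ring
  have key2 : ∀ a b : ℝ, 0 ≤ a → 0 ≤ b →
      |mz γ a - mz γ b| ≤ γ * (|a| ^ (γ - 1) + |b| ^ (γ - 1)) * |a - b| := by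
    intro a b ha hb
    rcases le_total b a with h | h
    · exact key a b hb h
    · rw [abs_sub_comm, abs_sub_comm a b, add_comm (|a| ^ (γ-1))]; exact key b a ha h
  rcases le_or_gt 0 a with ha | ha <;> rcases le_or_gt 0 b with hb | hb
  · exact key2 a b ha hb
  · exact keyo a b ha hb
  · rw [abs_sub_comm, abs_sub_comm a b, add_comm (|a| ^ (γ-1))]; exact keyo b a hb ha
  · have := key2 (-a) (-b) (by linarith) (by linarith)
    rw [show -a - -b = -(a - b) by ring, abs_neg, abs_neg, abs_neg] at this
    rw [show mz γ a - mz γ b = -(mz γ (-a) - mz γ (-b)) by rw [mz_neg, mz_neg]; ring, abs_neg]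
    exact this


open Real Finset

/-- crude two-term power bound -/
lemma add_rpow_le_two_rpow (x y s : ℝ) (hx : 0 ≤ x) (hy : 0 ≤ y) (hs : 0 ≤ s) :
    (x + y) ^ s ≤ 2 ^ s * (x ^ s + y ^ s) := by
  have h1 : x + y ≤ 2 * max x y := by
    rcases le_total x y with h | h
    · rw [max_eq_right h]; linarith
    · rw [max_eq_left h]; linarith
  have h2 : (x + y) ^ s ≤ (2 * max x y) ^ s :=
    Real.rpow_le_rpow (by linarith) h1 hs
  have h3 : (2 * max x y) ^ s = 2 ^ s * (max x y) ^ s :=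
    Real.mul_rpow (by norm_num) (le_max_iff.mpr (Or.inl hx))
  have h4 : (max x y) ^ s ≤ x ^ s + y ^ s := by
    rcases le_total x y with h | h
    · rw [max_eq_right h]
      have := Real.rpow_nonneg hx s
      linarith
    · rw [max_eq_left h]
      have := Real.rpow_nonneg hy s
      linarith
  calc (x + y) ^ s ≤ (2 * max x y) ^ s := h2
  _ = 2 ^ s * (max x y) ^ s := h3
  _ ≤ 2 ^ s * (x ^ s + y ^ s) := by
      have : (0:ℝ) ≤ 2 ^ s := Real.rpow_nonneg (by norm_num) s
      nlinarith

/-- The combined Mazur-map transfer estimate on finite index types. -/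
lemma comb {r R : ℝ} (hr : 0 < r) (hR : 0 < R) :
    ∃ K θ : ℝ, 0 < K ∧ 0 < θ ∧ ∀ (D : Type*) (_ : Fintype D) (f g : D → ℝ),
      (∑ x, |f x| ^ r) ≤ 2 ^ r → (∑ x, |g x| ^ r) ≤ 2 ^ r →
      (∑ x, |mz (r/R) (f x) - mz (r/R) (g x)| ^ R) ≤ K * (∑ x, |f x - g x| ^ r) ^ θ := by
  rcases le_or_gt r R with hle | hlt
  · -- easy case: γ = r/R ≤ 1, θ = 1, K = 2 ^ R
    refine ⟨2 ^ R, 1, Real.rpow_pos_of_pos (by norm_num) R, one_pos, ?_⟩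
    intro D _ f g _ _
    rw [Real.rpow_one]
    rw [Finset.mul_sum]
    apply Finset.sum_le_sum
    intro x _
    have hγ0 : 0 < r / R := div_pos hr hR
    have hγ1 : r / R ≤ 1 := by
      rw [div_le_one hR]; exact hle
    have h1 := mz_sub_abs_le hγ0 hγ1 (f x) (g x)
    have h2 : |mz (r/R) (f x) - mz (r/R) (g x)| ^ R ≤ (2 * |f x - g x| ^ (r/R)) ^ R :=
      Real.rpow_le_rpow (abs_nonneg _) h1 hR.le
    have h3 : (2 * |f x - g x| ^ (r/R)) ^ R = 2 ^ R * (|f x - g x| ^ (r/R)) ^ R :=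
      Real.mul_rpow (by norm_num) (Real.rpow_nonneg (abs_nonneg _) _)
    have h4 : (|f x - g x| ^ (r/R)) ^ R = |f x - g x| ^ r := by
      rw [← Real.rpow_mul (abs_nonneg _), div_mul_cancel₀ _ hR.ne']
    rw [h3, h4] at h2
    exact h2
  · -- hard case: γ = r/R > 1
    set γ := r / R with hγdef
    have hγ : 1 < γ := (one_lt_div hR).mpr hlt
    set u := r / (r - R) with hu
    set v := r / R with hv
    have hconj : Real.HolderConjugate u v := by
      rw [Real.holderConjugate_iff]
      constructor
      · rw [hu, lt_div_iff₀ (by linarith)]; linarith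
      · rw [hu, hv]
        field_simp
        ring
    have hγ0 : (0:ℝ) < γ := by positivity
    have h2γ : (0:ℝ) < 2*γ := by linarith
    have hurR : (0:ℝ) < r - R := by linarith
    have hu0 : 0 < u := div_pos hr hurR
    refine ⟨(2*γ) ^ R * (2 ^ (r+1)) ^ (1/u), R/r, ?_, div_pos hR hr, ?_⟩
    · exact mul_pos (Real.rpow_pos_of_pos h2γ _)
        (Real.rpow_pos_of_pos (Real.rpow_pos_of_pos two_pos _) _)
    intro D _ f g hf hg
    set A : D → ℝ := fun x => (γ * (|f x| ^ (γ - 1) + |g x| ^ (γ - 1))) ^ R with hA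
    set B : D → ℝ := fun x => |f x - g x| ^ R with hB
    have hAnn : ∀ x, 0 ≤ A x := fun x => Real.rpow_nonneg (by positivity) _
    have hBnn : ∀ x, 0 ≤ B x := fun x => Real.rpow_nonneg (abs_nonneg _) _
    have step1 : (∑ x, |mz γ (f x) - mz γ (g x)| ^ R) ≤ ∑ x, A x * B x := by
      apply Finset.sum_le_sum
      intro x _
      have h1 := mz_sub_abs_le' hγ.le (f x) (g x)
      have h2 : |mz γ (f x) - mz γ (g x)| ^ R ≤
          (γ * (|f x| ^ (γ - 1) + |g x| ^ (γ - 1)) * |f x - g x|) ^ R :=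
        Real.rpow_le_rpow (abs_nonneg _) h1 hR.le
      rw [Real.mul_rpow (by positivity) (abs_nonneg _)] at h2
      exact h2
    have step2 : (∑ x, A x * B x) ≤
        (∑ x, |A x| ^ u) ^ (1/u) * (∑ x, |B x| ^ v) ^ (1/v) :=
      Real.inner_le_Lp_mul_Lq Finset.univ A B hconj
    have hBv : ∀ x : D, |B x| ^ v = |f x - g x| ^ r := by
      intro x
      rw [hB, abs_of_nonneg (Real.rpow_nonneg (abs_nonneg _) _),
        ← Real.rpow_mul (abs_nonneg _), hv]
      congr 1
      field_simp
    have hAu : ∀ x : D, |A x| ^ u ≤ (2*γ) ^ (R*u) * (|f x| ^ r + |g x| ^ r) := by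
      intro x
      have hbase : (0:ℝ) ≤ γ * (|f x| ^ (γ-1) + |g x| ^ (γ-1)) := by
        have := Real.rpow_nonneg (abs_nonneg (f x)) (γ-1)
        have := Real.rpow_nonneg (abs_nonneg (g x)) (γ-1)
        nlinarith
      rw [hA, abs_of_nonneg (Real.rpow_nonneg hbase R), ← Real.rpow_mul hbase]
      have e1 : (γ * (|f x| ^ (γ - 1) + |g x| ^ (γ - 1))) ^ (R*u) =
          γ ^ (R*u) * ((|f x| ^ (γ - 1) + |g x| ^ (γ - 1))) ^ (R*u) :=
        Real.mul_rpow hγ0.le (by positivity)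
      have hRu : 0 ≤ R * u := by positivity
      have e2 : ((|f x| ^ (γ - 1) + |g x| ^ (γ - 1))) ^ (R*u) ≤
          2 ^ (R*u) * ((|f x| ^ (γ - 1)) ^ (R*u) + (|g x| ^ (γ - 1)) ^ (R*u)) :=
        add_rpow_le_two_rpow _ _ _ (by positivity) (by positivity) hRu
      have e3 : ∀ t : ℝ, (|t| ^ (γ - 1)) ^ (R*u) = |t| ^ r := by
        intro t
        rw [← Real.rpow_mul (abs_nonneg t)]
        congr 1
        rw [hγdef, hv, hu]
        field_simp
        try ring
      rw [e1]
      calc γ ^ (R*u) * ((|f x| ^ (γ - 1) + |g x| ^ (γ - 1))) ^ (R*u)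
          ≤ γ ^ (R*u) * (2 ^ (R*u) * ((|f x| ^ (γ - 1)) ^ (R*u) + (|g x| ^ (γ - 1)) ^ (R*u))) := by
            have : (0:ℝ) ≤ γ ^ (R*u) := Real.rpow_nonneg (by linarith) _
            nlinarith [e2, this]
      _ = (2*γ) ^ (R*u) * ((|f x| ^ (γ - 1)) ^ (R*u) + (|g x| ^ (γ - 1)) ^ (R*u)) := by
            rw [Real.mul_rpow (by norm_num : (0:ℝ) ≤ 2) hγ0.le]
            ring
      _ = (2*γ) ^ (R*u) * (|f x| ^ r + |g x| ^ r) := by rw [e3, e3]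
    -- sum the A-bound
    have sumA : (∑ x, |A x| ^ u) ≤ (2*γ) ^ (R*u) * 2 ^ (r+1) := by
      calc (∑ x, |A x| ^ u) ≤ ∑ x, (2*γ) ^ (R*u) * (|f x| ^ r + |g x| ^ r) :=
            Finset.sum_le_sum (fun x _ => hAu x)
      _ = (2*γ) ^ (R*u) * ((∑ x, |f x| ^ r) + (∑ x, |g x| ^ r)) := by
            rw [← Finset.mul_sum, Finset.sum_add_distrib]
      _ ≤ (2*γ) ^ (R*u) * (2 ^ r + 2 ^ r) := by
            have : (0:ℝ) ≤ (2*γ) ^ (R*u) := Real.rpow_nonneg (by positivity) _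
            nlinarith
      _ = (2*γ) ^ (R*u) * 2 ^ (r+1) := by
            rw [Real.rpow_add (by norm_num : (0:ℝ) < 2), Real.rpow_one]
            ring
    have sumA' : (∑ x, |A x| ^ u) ^ (1/u) ≤ (2*γ) ^ R * (2 ^ (r+1)) ^ (1/u) := by
      have h1 : (∑ x, |A x| ^ u) ^ (1/u) ≤ ((2*γ) ^ (R*u) * 2 ^ (r+1)) ^ (1/u) :=
        Real.rpow_le_rpow (Finset.sum_nonneg fun x _ => Real.rpow_nonneg (abs_nonneg _) _)
          sumA (by positivity)
      have h2 : ((2*γ) ^ (R*u) * 2 ^ (r+1)) ^ (1/u) =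
          ((2*γ) ^ (R*u)) ^ (1/u) * (2 ^ (r+1) : ℝ) ^ (1/u) :=
        Real.mul_rpow (Real.rpow_nonneg h2γ.le _) (Real.rpow_nonneg (by norm_num) _)
      have h3 : ((2*γ) ^ (R*u)) ^ (1/u) = (2*γ) ^ R := by
        rw [← Real.rpow_mul h2γ.le]
        congr 1
        field_simp
      rw [h2, h3] at h1
      exact h1
    have hBsum : (∑ x, |B x| ^ v) ^ (1/v) = (∑ x, |f x - g x| ^ r) ^ (R/r) := by
      rw [Finset.sum_congr rfl fun x _ => hBv x, hv, one_div_div]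
    calc (∑ x, |mz (r/R) (f x) - mz (r/R) (g x)| ^ R)
        ≤ ∑ x, A x * B x := step1
    _ ≤ (∑ x, |A x| ^ u) ^ (1/u) * (∑ x, |B x| ^ v) ^ (1/v) := step2
    _ ≤ ((2*γ) ^ R * (2 ^ (r+1)) ^ (1/u)) * (∑ x, |B x| ^ v) ^ (1/v) := by
          apply mul_le_mul_of_nonneg_right sumA'
          exact Real.rpow_nonneg (Finset.sum_nonneg fun x _ =>
            Real.rpow_nonneg (abs_nonneg _) _) _
    _ = ((2*γ) ^ R * (2 ^ (r+1)) ^ (1/u)) * (∑ x, |f x - g x| ^ r) ^ (R/r) := by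
          rw [hBsum]


open Real Finset

lemma abs_rpow_two (t : ℝ) : |t| ^ (2:ℝ) = t * t := by
  rw [show ((2:ℝ)) = ((2:ℕ):ℝ) by norm_num, Real.rpow_natCast, sq_abs, sq]

lemma norm_rpow_two (z : ℂ) : ‖z‖ ^ (2:ℝ) = z.re * z.re + z.im * z.im := by
  rw [show ((2:ℝ)) = ((2:ℕ):ℝ) by norm_num, Real.rpow_natCast,
    Complex.sq_norm, Complex.normSq_apply]

/-- mass transfer under the Mazur map -/
lemma mass_mz {s t : ℝ} (hs : 0 < s) (ht : 0 < t) (x : ℝ) :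
    |mz (s/t) x| ^ t = |x| ^ s := by
  rw [abs_mz _ _ (by positivity), ← Real.rpow_mul (abs_nonneg x), div_mul_cancel₀ _ ht.ne']

/-- The distance lower bound: a Mazur image of a mean-zero unit `ℓ₂` vector is far
from the constants in `ℓ_p`. -/
lemma delta {p : ℝ} (hp1 : 1 < p) :
    ∃ δ : ℝ, 0 < δ ∧ ∀ (D : Type*) (_ : Fintype D) (w : D → ℝ),
      (∑ x, w x) = 0 → (∑ x, |w x| ^ (2:ℝ)) = 1 → ∀ c : ℝ,
      δ ≤ ∑ x, |mz (2/p) (w x) - c| ^ p := by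
  have hp0 : 0 < p := by linarith
  obtain ⟨K, θ, hK, hθ, hcomb⟩ := comb hp0 (two_pos : (0:ℝ) < 2)
  refine ⟨min 1 ((2*K)⁻¹ ^ θ⁻¹), lt_min one_pos (Real.rpow_pos_of_pos (by positivity) _), ?_⟩
  set δ := min 1 ((2*K)⁻¹ ^ θ⁻¹) with hδdef
  have hδ1 : δ ≤ 1 := min_le_left _ _
  have hδ0 : 0 < δ := lt_min one_pos (Real.rpow_pos_of_pos (by positivity) _)
  intro D instD w hw0 hw2 c
  by_contra hcon
  push_neg at hcon
  set v : D → ℝ := fun x => mz (2/p) (w x) with hv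
  have hmassv : (∑ x, |v x| ^ p) = 1 := by
    rw [show (∑ x, |v x| ^ p) = ∑ x, |w x| ^ (2:ℝ) from
      Finset.sum_congr rfl fun x _ => mass_mz two_pos hp0 (w x), hw2]
  have hSnn : 0 ≤ ∑ x, |v x - c| ^ p :=
    Finset.sum_nonneg fun x _ => Real.rpow_nonneg (abs_nonneg _) _
  -- mass bound for the constant function via Minkowski
  have hminb : (∑ x, |(fun _ : D => c) x| ^ p) ≤ 2 ^ p := by
    have hmink := Real.Lp_add_le Finset.univ v (fun x => c - v x) hp1.le
    have e1 : ∀ x : D, v x + (c - v x) = c := fun x => by ring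
    rw [Finset.sum_congr rfl fun x (_ : x ∈ Finset.univ) => by rw [e1 x]] at hmink
    have e2 : (∑ x, |v x| ^ p) ^ (1/p) = 1 := by rw [hmassv, Real.one_rpow]
    have e3 : (∑ x, |c - v x| ^ p) ^ (1/p) ≤ 1 := by
      have e4 : (∑ x, |c - v x| ^ p) = ∑ x, |v x - c| ^ p :=
        Finset.sum_congr rfl fun x _ => by rw [abs_sub_comm]
      rw [e4]
      have e5 : (∑ x, |v x - c| ^ p) ^ (1/p) ≤ δ ^ (1/p) :=
        Real.rpow_le_rpow hSnn hcon.le (by positivity)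
      exact e5.trans (Real.rpow_le_one hδ0.le hδ1 (by positivity))
    have e6 : ((∑ x : D, |c| ^ p) ^ (1/p)) ≤ 2 := by
      calc ((∑ x : D, |c| ^ p) ^ (1/p)) ≤ (∑ x, |v x| ^ p) ^ (1/p) +
          (∑ x, |c - v x| ^ p) ^ (1/p) := hmink
      _ ≤ 1 + 1 := by rw [e2]; linarith
      _ = 2 := by norm_num
    have e7 : (0:ℝ) ≤ ∑ x : D, |c| ^ p :=
      Finset.sum_nonneg fun x _ => Real.rpow_nonneg (abs_nonneg _) _
    calc (∑ x : D, |(fun _ : D => c) x| ^ p) = ∑ x : D, |c| ^ p := rfl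
    _ = (((∑ x : D, |c| ^ p) ^ (1/p)) : ℝ) ^ p := by
        rw [one_div, Real.rpow_inv_rpow e7 hp0.ne']
    _ ≤ 2 ^ p := Real.rpow_le_rpow (Real.rpow_nonneg e7 _) e6 hp0.le
  have hmassv' : (∑ x, |v x| ^ p) ≤ 2 ^ p := by
    rw [hmassv]
    calc (1:ℝ) = 2 ^ (0:ℝ) := by rw [Real.rpow_zero]
    _ ≤ 2 ^ p := Real.rpow_le_rpow_of_exponent_le one_le_two hp0.le
  have happ := hcomb D instD v (fun _ => c) hmassv' hminb
  -- rewrite the LHS of happ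
  have hcompid : ∀ x : D, mz (p/2) (v x) = w x := fun x => by
    rw [hv]
    show mz (p/2) (mz (2/p) (w x)) = w x
    rw [mz_comp _ _ _ (by positivity) (by positivity),
      show (2/p) * (p/2) = 1 by field_simp, mz_one]
  set c' := mz (p/2) c with hc'
  have hLHS : (∑ x, |mz (p/2) (v x) - mz (p/2) ((fun _ : D => c) x)| ^ (2:ℝ)) =
      ∑ x, |w x - c'| ^ (2:ℝ) :=
    Finset.sum_congr rfl fun x _ => by rw [hcompid x]
  have hlow : (1:ℝ) ≤ ∑ x, |w x - c'| ^ (2:ℝ) := by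
    have expand : (∑ x, |w x - c'| ^ (2:ℝ)) =
        (∑ x, w x * w x) - 2*c'*(∑ x, w x) + (Fintype.card D : ℝ) * (c' * c') := by
      calc (∑ x, |w x - c'| ^ (2:ℝ)) = ∑ x, (w x * w x - 2*c'*(w x) + c'*c') :=
            Finset.sum_congr rfl fun x _ => by rw [abs_rpow_two]; ring
      _ = (∑ x, w x * w x) - 2*c'*(∑ x, w x) + (Fintype.card D : ℝ) * (c' * c') := by
            rw [Finset.sum_add_distrib, Finset.sum_sub_distrib, ← Finset.mul_sum,
              Finset.sum_const, Finset.card_univ, nsmul_eq_mul]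
    have hw2' : (∑ x, w x * w x) = 1 := by
      rw [← hw2]; exact Finset.sum_congr rfl fun x _ => (abs_rpow_two (w x)).symm
    rw [expand, hw2', hw0]
    have : (0:ℝ) ≤ (Fintype.card D : ℝ) * (c' * c') :=
      mul_nonneg (Nat.cast_nonneg _) (mul_self_nonneg c')
    linarith
  -- combine
  have hfin : (1:ℝ) ≤ K * (∑ x, |v x - c| ^ p) ^ θ := by
    calc (1:ℝ) ≤ ∑ x, |w x - c'| ^ (2:ℝ) := hlow
    _ = ∑ x, |mz (p/2) (v x) - mz (p/2) ((fun _ : D => c) x)| ^ (2:ℝ) := hLHS.symm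
    _ ≤ K * (∑ x, |v x - (fun _ : D => c) x| ^ p) ^ θ := happ
    _ = K * (∑ x, |v x - c| ^ p) ^ θ := rfl
  have hsmall : K * (∑ x, |v x - c| ^ p) ^ θ ≤ 2⁻¹ := by
    have h1 : (∑ x, |v x - c| ^ p) ^ θ ≤ δ ^ θ := Real.rpow_le_rpow hSnn hcon.le hθ.le
    have h2 : δ ^ θ ≤ (2*K)⁻¹ := by
      have h3 : δ ≤ (2*K)⁻¹ ^ θ⁻¹ := min_le_right _ _
      have h4 : δ ^ θ ≤ ((2*K)⁻¹ ^ θ⁻¹) ^ θ := Real.rpow_le_rpow hδ0.le h3 hθ.le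
      rwa [Real.rpow_inv_rpow (by positivity) hθ.ne'] at h4
    calc K * (∑ x, |v x - c| ^ p) ^ θ ≤ K * (2*K)⁻¹ := by nlinarith
    _ = 2⁻¹ := by
        field_simp
  linarith [hfin.trans hsmall]


open Real Finset

/-- The master finite lemma: from a mean-zero complex `ℓ₂` vector, produce a mean-zero
real unit `ℓ_p` vector with controlled movement under all permutations. -/
lemma master {p : ℝ} (hp1 : 1 < p) :
    ∃ K θ : ℝ, 0 < K ∧ 0 < θ ∧ ∀ (D : Type*) (_ : Fintype D) (_ : Nonempty D) (F : D → ℂ),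
      (∑ x, F x) = 0 → 0 < (∑ x, ‖F x‖ ^ (2:ℝ)) →
      ∃ y : D → ℝ, (∑ x, y x) = 0 ∧ (∑ x, |y x| ^ p) = 1 ∧
        ∀ σ : Equiv.Perm D, (∑ x, |y (σ x) - y x| ^ p) ≤
          K * ((∑ x, ‖F (σ x) - F x‖ ^ (2:ℝ)) / (∑ x, ‖F x‖ ^ (2:ℝ))) ^ θ := by
  have hp0 : (0:ℝ) < p := by linarith
  obtain ⟨K₁, θ₁, hK₁, hθ₁, hA⟩ := comb (two_pos : (0:ℝ) < 2) hp0
  obtain ⟨δ, hδ, hdelta⟩ := delta hp1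
  refine ⟨K₁ * 2 ^ θ₁ / δ, θ₁, by positivity, hθ₁, ?_⟩
  intro D instD instNe F hF0 hFpos
  set S := ∑ x, ‖F x‖ ^ (2:ℝ) with hSdef
  -- real reduction: pick real or imaginary part
  obtain ⟨u, hu0, huS, hud⟩ : ∃ u : D → ℝ, (∑ x, u x) = 0 ∧
      S/2 ≤ (∑ x, |u x| ^ (2:ℝ)) ∧ ∀ x x' : D, |u x' - u x| ≤ ‖F x' - F x‖ := by
    have hsplit : S = (∑ x, |(F x).re| ^ (2:ℝ)) + (∑ x, |(F x).im| ^ (2:ℝ)) := by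
      rw [hSdef, ← Finset.sum_add_distrib]
      exact Finset.sum_congr rfl fun x _ => by
        rw [norm_rpow_two, abs_rpow_two, abs_rpow_two]
    rcases le_total ((∑ x, |(F x).re| ^ (2:ℝ))) ((∑ x, |(F x).im| ^ (2:ℝ))) with h | h
    · refine ⟨fun x => (F x).im, ?_, by linarith, ?_⟩
      · rw [← Complex.im_sum, hF0, Complex.zero_im]
      · intro x x'
        have h2 := Complex.abs_im_le_norm (F x' - F x)
        rw [Complex.sub_im] at h2
        exact h2
    · refine ⟨fun x => (F x).re, ?_, by linarith, ?_⟩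
      · rw [← Complex.re_sum, hF0, Complex.zero_re]
      · intro x x'
        have h2 := Complex.abs_re_le_norm (F x' - F x)
        rw [Complex.sub_re] at h2
        exact h2
  set Su := ∑ x, |u x| ^ (2:ℝ) with hSu
  have hSupos : 0 < Su := lt_of_lt_of_le (by linarith) huS
  set cu := Su ^ (2⁻¹:ℝ) with hcu
  have hcupos : 0 < cu := Real.rpow_pos_of_pos hSupos _
  have hcusq : cu ^ (2:ℝ) = Su := Real.rpow_inv_rpow hSupos.le two_ne_zero
  set w : D → ℝ := fun x => u x / cu with hw
  have hw0 : (∑ x, w x) = 0 := by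
    rw [hw, ← Finset.sum_div, hu0, zero_div]
  have habsw : ∀ t s : ℝ, |t / cu - s / cu| ^ (2:ℝ) = |t - s| ^ (2:ℝ) / Su := by
    intro t s
    rw [div_sub_div_same, abs_div, abs_of_pos hcupos,
      Real.div_rpow (abs_nonneg _) hcupos.le, hcusq]
  have hw2 : (∑ x, |w x| ^ (2:ℝ)) = 1 := by
    have : ∀ x : D, |w x| ^ (2:ℝ) = |u x| ^ (2:ℝ) / Su := by
      intro x
      have := habsw (u x) 0
      simpa using this
    rw [Finset.sum_congr rfl fun x _ => this x, ← Finset.sum_div, ← hSu, div_self hSupos.ne']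
  -- the Mazur image
  set v : D → ℝ := fun x => mz (2/p) (w x) with hv
  have hmassv : (∑ x, |v x| ^ p) = 1 := by
    rw [show (∑ x, |v x| ^ p) = ∑ x, |w x| ^ (2:ℝ) from
      Finset.sum_congr rfl fun x _ => mass_mz two_pos hp0 (w x), hw2]
  set c0 := (∑ x, v x) / (Fintype.card D : ℝ) with hc0
  set v' : D → ℝ := fun x => v x - c0 with hv'
  have hcard : (0:ℝ) < (Fintype.card D : ℝ) := by
    have := Fintype.card_pos (α := D)
    exact_mod_cast this
  have hv'0 : (∑ x, v' x) = 0 := by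
    rw [hv']
    rw [Finset.sum_sub_distrib, Finset.sum_const, Finset.card_univ, nsmul_eq_mul, hc0]
    field_simp
    simp
  have hLdelta : δ ≤ ∑ x, |v' x| ^ p := hdelta D instD w hw0 hw2 c0
  set L := ∑ x, |v' x| ^ p with hL
  have hLpos : 0 < L := lt_of_lt_of_le hδ hLdelta
  set T := L ^ (p⁻¹ : ℝ) with hT
  have hTpos : 0 < T := Real.rpow_pos_of_pos hLpos _
  have hTp : T ^ p = L := Real.rpow_inv_rpow hLpos.le hp0.ne'
  refine ⟨fun x => v' x / T, ?_, ?_, ?_⟩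
  · rw [← Finset.sum_div, hv'0, zero_div]
  · have e : ∀ x : D, |v' x / T| ^ p = |v' x| ^ p / L := by
      intro x
      rw [abs_div, abs_of_pos hTpos, Real.div_rpow (abs_nonneg _) hTpos.le, hTp]
    rw [Finset.sum_congr rfl fun x _ => e x, ← Finset.sum_div, ← hL, div_self hLpos.ne']
  · intro σ
    -- the p-sum of the increments
    have ed : ∀ x : D, |v' (σ x) / T - v' x / T| ^ p = |v (σ x) - v x| ^ p / L := by
      intro x
      rw [div_sub_div_same, abs_div, abs_of_pos hTpos,
        Real.div_rpow (abs_nonneg _) hTpos.le, hTp]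
      congr 2
      rw [hv']
      ring
    rw [Finset.sum_congr rfl fun x _ => ed x, ← Finset.sum_div]
    -- apply the transfer estimate
    have hone_le : (1:ℝ) ≤ 2 ^ (2:ℝ) := by
      rw [show ((2:ℝ)) = ((2:ℕ):ℝ) by norm_num, Real.rpow_natCast]
      norm_num
    have hmw : (∑ x, |w (σ x)| ^ (2:ℝ)) ≤ 2 ^ (2:ℝ) := by
      rw [Equiv.sum_comp σ (fun x => |w x| ^ (2:ℝ)), hw2]; exact hone_le
    have hmw' : (∑ x, |w x| ^ (2:ℝ)) ≤ 2 ^ (2:ℝ) := by rw [hw2]; exact hone_le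
    have happ := hA D instD (fun x => w (σ x)) w hmw hmw'
    have hincr : (∑ x, |v (σ x) - v x| ^ p) ≤ K₁ * (∑ x, |w (σ x) - w x| ^ (2:ℝ)) ^ θ₁ := happ
    -- bound the ℓ₂ increment of w by the ratio
    set ratio := (∑ x, ‖F (σ x) - F x‖ ^ (2:ℝ)) / S with hratio
    have hratio_nn : 0 ≤ ratio := by
      apply div_nonneg _ (by linarith)
      exact Finset.sum_nonneg fun x _ => Real.rpow_nonneg (norm_nonneg _) _
    have hwbound : (∑ x, |w (σ x) - w x| ^ (2:ℝ)) ≤ 2 * ratio := by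
      have e1 : ∀ x : D, |w (σ x) - w x| ^ (2:ℝ) = |u (σ x) - u x| ^ (2:ℝ) / Su :=
        fun x => habsw (u (σ x)) (u x)
      rw [Finset.sum_congr rfl fun x _ => e1 x, ← Finset.sum_div]
      have e2 : (∑ x, |u (σ x) - u x| ^ (2:ℝ)) ≤ ∑ x, ‖F (σ x) - F x‖ ^ (2:ℝ) :=
        Finset.sum_le_sum fun x _ => Real.rpow_le_rpow (abs_nonneg _) (hud x (σ x)) two_pos.le
      have e3 : (∑ x, |u (σ x) - u x| ^ (2:ℝ)) / Su ≤
          (∑ x, ‖F (σ x) - F x‖ ^ (2:ℝ)) / (S / 2) := by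
        apply div_le_div₀ (Finset.sum_nonneg fun x _ => Real.rpow_nonneg (norm_nonneg _) _)
          e2 (by linarith) huS
      calc (∑ x, |u (σ x) - u x| ^ (2:ℝ)) / Su
          ≤ (∑ x, ‖F (σ x) - F x‖ ^ (2:ℝ)) / (S / 2) := e3
      _ = 2 * ratio := by rw [hratio]; field_simp
    -- finish
    have hval : (∑ x, |v (σ x) - v x| ^ p) ≤ K₁ * (2 * ratio) ^ θ₁ := by
      refine hincr.trans ?_
      have : (∑ x, |w (σ x) - w x| ^ (2:ℝ)) ^ θ₁ ≤ (2 * ratio) ^ θ₁ :=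
        Real.rpow_le_rpow (Finset.sum_nonneg fun x _ => Real.rpow_nonneg (abs_nonneg _) _)
          hwbound hθ₁.le
      nlinarith
    have hmul : (2 * ratio) ^ θ₁ = 2 ^ θ₁ * ratio ^ θ₁ :=
      Real.mul_rpow (by norm_num) hratio_nn
    calc (∑ x, |v (σ x) - v x| ^ p) / L ≤ (K₁ * (2 * ratio) ^ θ₁) / δ := by
          apply div_le_div₀ _ hval hδ hLdelta
          positivity
    _ = (K₁ * 2 ^ θ₁ / δ) * ratio ^ θ₁ := by
          rw [hmul]
          field_simp



variable {pE : ℝ≥0∞} [Fact (1 ≤ pE)]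

lemma memℓp_comp_perm (σ : Equiv.Perm ℕ) (f : lp (fun _ : ℕ => ℂ) pE) :
    Memℓp (fun m => (f : ℕ → ℂ) (σ m)) pE := by
  simpa using (lp.memℓp f).twist σ (h := fun _ => 1) (fun x => norm_one)

lemma rpow_cancel {a b t : ℝ} (ha : 0 ≤ a) (hb : 0 ≤ b) (ht : t ≠ 0) (h : a ^ t = b ^ t) :
    a = b := by
  have : (a ^ t) ^ t⁻¹ = (b ^ t) ^ t⁻¹ := by rw [h]
  rwa [Real.rpow_rpow_inv ha ht, Real.rpow_rpow_inv hb ht] at this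

/-- the isometry of `ℓ_p(ℕ)` induced by composition with a permutation -/
def permIso (hpt : 0 < pE.toReal) (σ : Equiv.Perm ℕ) :
    lp (fun _ : ℕ => ℂ) pE ≃ₗᵢ[ℂ] lp (fun _ : ℕ => ℂ) pE where
  toFun f := ⟨fun m => f (σ m), memℓp_comp_perm σ f⟩
  invFun f := ⟨fun m => f (σ⁻¹ m), memℓp_comp_perm σ⁻¹ f⟩
  map_add' f g := by
    apply lp.ext
    funext m
    simp only [lp.coeFn_add, Pi.add_apply]
  map_smul' c f := by
    apply lp.ext
    funext m
    simp only [lp.coeFn_smul, Pi.smul_apply, RingHom.id_apply]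
  left_inv f := by
    apply lp.ext
    funext m
    show (f : ℕ → ℂ) (σ (σ⁻¹ m)) = f m
    rw [← Equiv.Perm.mul_apply, mul_inv_cancel, Equiv.Perm.one_apply]
  right_inv f := by
    apply lp.ext
    funext m
    show (f : ℕ → ℂ) (σ⁻¹ (σ m)) = f m
    rw [← Equiv.Perm.mul_apply, inv_mul_cancel, Equiv.Perm.one_apply]
  norm_map' f := by
    apply rpow_cancel (norm_nonneg _) (norm_nonneg _) hpt.ne'
    rw [lp.norm_rpow_eq_tsum hpt, lp.norm_rpow_eq_tsum hpt]
    exact σ.tsum_eq (fun m => ‖(f : ℕ → ℂ) m‖ ^ pE.toReal)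

@[simp] lemma permIso_apply (hpt : 0 < pE.toReal) (σ : Equiv.Perm ℕ)
    (f : lp (fun _ : ℕ => ℂ) pE) (m : ℕ) :
    (permIso hpt σ f : ℕ → ℂ) m = f (σ m) := rfl



variable {pE : ℝ≥0∞} [Fact (1 ≤ pE)]

section Construction

variable {Γ : Type*} [Group Γ] {H : ℕ → Subgroup Γ} [∀ n, Fintype (Γ ⧸ H n)]

/-- extension of a function on the `n`-th fiber by zero -/
def extF (n : ℕ) (u : Γ ⧸ H n → ℂ) : (Σ k, Γ ⧸ H k) → ℂ :=
  fun x => if h : x.1 = n then u (h ▸ x.2) else 0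

lemma extF_mk_self (n : ℕ) (u : Γ ⧸ H n → ℂ) (d : Γ ⧸ H n) :
    extF n u ⟨n, d⟩ = u d := by simp [extF]

lemma extF_ne {n k : ℕ} (h : k ≠ n) (u : Γ ⧸ H n → ℂ) (d : Γ ⧸ H k) :
    extF n u ⟨k, d⟩ = 0 := dif_neg h

lemma extF_fst_ne {n : ℕ} (u : Γ ⧸ H n → ℂ) {x : Σ k, Γ ⧸ H k} (h : x.1 ≠ n) :
    extF n u x = 0 := dif_neg h

lemma extF_smul (n : ℕ) (u : Γ ⧸ H n → ℂ) (g : Γ) (x : Σ k, Γ ⧸ H k) :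
    extF n u (g • x) = extF n (fun d => u (g • d)) x := by
  rcases x with ⟨k, d⟩
  have hsm : g • (⟨k, d⟩ : Σ k, Γ ⧸ H k) = ⟨k, g • d⟩ := rfl
  by_cases h : k = n
  · subst h
    rw [hsm, extF_mk_self, extF_mk_self]
  · rw [hsm, extF_ne h, extF_ne h]

lemma extF_sub (n : ℕ) (u u' : Γ ⧸ H n → ℂ) (x : Σ k, Γ ⧸ H k) :
    extF n u x - extF n u' x = extF n (fun d => u d - u' d) x := by
  rcases x with ⟨k, d⟩
  by_cases h : k = n
  · subst h
    rw [extF_mk_self, extF_mk_self, extF_mk_self]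
  · rw [extF_ne h, extF_ne h, extF_ne h]
    simp

/-- the fiber as an embedding -/
def femb (n : ℕ) : (Γ ⧸ H n) ↪ (Σ k, Γ ⧸ H k) := ⟨fun d => ⟨n, d⟩, fun a b h => by cases h; rfl⟩

lemma mem_femb {n : ℕ} {x : Σ k, Γ ⧸ H k} (h : x.1 = n) :
    x ∈ Finset.univ.map (femb (H := H) n) := by
  rcases x with ⟨k, d⟩
  subst h
  exact Finset.mem_map.mpr ⟨d, Finset.mem_univ d, rfl⟩

lemma tsum_fiber_eq {M : Type*} [AddCommMonoid M] [TopologicalSpace M] [T2Space M]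
    (G : (Σ k, Γ ⧸ H k) → M) (n : ℕ) (hG : ∀ x : Σ k, Γ ⧸ H k, x.1 ≠ n → G x = 0) :
    ∑' x, G x = ∑ d, G ⟨n, d⟩ := by
  rw [tsum_eq_sum (s := Finset.univ.map (femb (H := H) n))
    (fun x hx => hG x (fun h => hx (mem_femb h)))]
  rw [Finset.sum_map]
  exact Finset.sum_congr rfl fun d _ => rfl

lemma summable_fiber {M : Type*} [AddCommGroup M] [UniformSpace M] [IsUniformAddGroup M]
    [CompleteSpace M] (G : (Σ k, Γ ⧸ H k) → M) (n : ℕ)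
    (hG : ∀ x : Σ k, Γ ⧸ H k, x.1 ≠ n → G x = 0) : Summable G :=
  summable_of_ne_finset_zero (s := Finset.univ.map (femb (H := H) n))
    (fun x hx => hG x (fun h => hx (mem_femb h)))

variable (e : (Σ k, Γ ⧸ H k) ≃ ℕ)

/-- the canonical `ℓ_p(ℕ)`-vector supported on the `n`-th fiber -/
def mkLp (hpt : 0 < pE.toReal) (n : ℕ) (u : Γ ⧸ H n → ℂ) : lp (fun _ : ℕ => ℂ) pE :=
  ⟨fun m => extF n u (e.symm m), by
    apply memℓp_gen
    have hs := summable_fiber (fun x => ‖extF n u x‖ ^ pE.toReal) n (fun x hx => by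
      show ‖extF n u x‖ ^ pE.toReal = 0
      rw [extF_fst_ne u hx, norm_zero, Real.zero_rpow hpt.ne'])
    simpa [Function.comp_def] using (Equiv.summable_iff e.symm).mpr hs⟩

lemma mkLp_apply (hpt : 0 < pE.toReal) (n : ℕ) (u : Γ ⧸ H n → ℂ) (m : ℕ) :
    (mkLp e hpt n u : ℕ → ℂ) m = extF n u (e.symm m) := rfl

lemma mkLp_sub (hpt : 0 < pE.toReal) (n : ℕ) (u u' : Γ ⧸ H n → ℂ) :
    mkLp e hpt n u - mkLp e hpt n u' = mkLp e hpt n (fun d => u d - u' d) := by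
  apply lp.ext
  funext m
  rw [lp.coeFn_sub]
  show (mkLp e hpt n u : ℕ → ℂ) m - (mkLp e hpt n u' : ℕ → ℂ) m = _
  rw [mkLp_apply, mkLp_apply, mkLp_apply, extF_sub]

lemma norm_mkLp (hpt : 0 < pE.toReal) (n : ℕ) (u : Γ ⧸ H n → ℂ) :
    ‖mkLp e hpt n u‖ ^ pE.toReal = ∑ d, ‖u d‖ ^ pE.toReal := by
  rw [lp.norm_rpow_eq_tsum hpt]
  have h1 : ∀ m : ℕ, ‖(mkLp e hpt n u : ℕ → ℂ) m‖ ^ pE.toReal =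
      (fun x => ‖extF n u x‖ ^ pE.toReal) (e.symm m) := fun m => rfl
  rw [tsum_congr h1, e.symm.tsum_eq (fun x => ‖extF n u x‖ ^ pE.toReal),
    tsum_fiber_eq _ n (fun x hx => by
      show ‖extF n u x‖ ^ pE.toReal = 0
      rw [extF_fst_ne u hx, norm_zero, Real.zero_rpow hpt.ne'])]
  exact Finset.sum_congr rfl fun d _ => by rw [extF_mk_self]

lemma dualPair_mkLp (hpt : 0 < pE.toReal) (n : ℕ) (u : Γ ⧸ H n → ℂ) (φ : ℕ → ℂ) :
    dualPair φ (mkLp e hpt n u : ℕ → ℂ) = ∑ d, φ (e ⟨n, d⟩) * u d := by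
  unfold dualPair
  have h1 : ∀ m : ℕ, φ m * (mkLp e hpt n u : ℕ → ℂ) m =
      (fun x => φ (e x) * extF n u x) (e.symm m) := by
    intro m
    show φ m * extF n u (e.symm m) = φ (e (e.symm m)) * extF n u (e.symm m)
    rw [e.apply_symm_apply]
  rw [tsum_congr h1, e.symm.tsum_eq (fun x => φ (e x) * extF n u x),
    tsum_fiber_eq _ n (fun x hx => by
      show φ (e x) * extF n u x = 0
      rw [extF_fst_ne u hx, mul_zero])]
  exact Finset.sum_congr rfl fun d _ => by rw [extF_mk_self]

/-- the permutation of `ℕ` induced by the action of `g` -/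
def natPerm (g : Γ) : Equiv.Perm ℕ :=
  (e.symm.trans (MulAction.toPerm g)).trans e

lemma natPerm_apply (g : Γ) (m : ℕ) : natPerm e g m = e (g • e.symm m) := rfl

variable [TopologicalSpace Γ] [DiscreteTopology Γ]

/-- the permutation representation of `Γ` on `ℓ_p(ℕ)` -/
def permRep (hpt : 0 < pE.toReal) : OrthRep Γ pE where
  toFun :=
    { toFun := fun g => permIso hpt (natPerm e g⁻¹)
      map_one' := by
        apply LinearIsometryEquiv.ext
        intro F
        apply lp.ext
        funext m
        rw [permIso_apply]
        show (F : ℕ → ℂ) (e ((1:Γ)⁻¹ • e.symm m)) = _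
        rw [inv_one, one_smul, e.apply_symm_apply]
        rfl
      map_mul' := by
        intro g h
        apply LinearIsometryEquiv.ext
        intro F
        apply lp.ext
        funext m
        rw [LinearIsometryEquiv.coe_mul, Function.comp_apply, permIso_apply, permIso_apply,
          permIso_apply]
        show (F : ℕ → ℂ) (e ((g*h)⁻¹ • e.symm m)) =
          (F : ℕ → ℂ) (e (h⁻¹ • e.symm (e (g⁻¹ • e.symm m))))
        rw [e.symm_apply_apply, mul_inv_rev, mul_smul]
      }
  continuous_apply := fun f => continuous_of_discreteTopology

lemma permRep_mkLp (hpt : 0 < pE.toReal) (g : Γ) (n : ℕ) (u : Γ ⧸ H n → ℂ) :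
    (permRep e hpt).toFun g (mkLp e hpt n u) = mkLp e hpt n (fun d => u (g⁻¹ • d)) := by
  apply lp.ext
  funext m
  show (permIso hpt (natPerm e g⁻¹) (mkLp e hpt n u) : ℕ → ℂ) m = _
  rw [permIso_apply, mkLp_apply, mkLp_apply, natPerm_apply, e.symm_apply_apply, extF_smul]

end Construction


end TlpAux
end TlpAuxSection

open TlpAux

/-- A countable discrete group with Property `(T_{ℓ_p})` for some
`1 < p < ∞`, `p ≠ 2`, has Lubotzky's Property `(τ)`. -/
theorem propertyTau_of_propertyTlp
    (Γ : Type*) [Group Γ] [Countable Γ] [TopologicalSpace Γ] [DiscreteTopology Γ]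
    (p : ℝ) (hp1 : 1 < p) (hp2 : p ≠ 2) (hT : HasPropertyTlp Γ p) :
    PropertyTau Γ := by
  classical
  by_contra hτ
  rw [PropertyTau] at hτ
  push_neg at hτ
  obtain ⟨e₀, he₀⟩ := exists_surjective_nat Γ
  set Qn : ℕ → Finset Γ := fun n => insert 1 ((Finset.range (n+1)).image e₀) with hQn
  have hsel : ∀ n : ℕ, ∃ Hn : Subgroup Γ, Hn.FiniteIndex ∧
      ∃ f : lp (fun _ : Γ ⧸ Hn => ℂ) 2,
        (∀ f₀ : lp (fun _ : Γ ⧸ Hn => ℂ) 2, (∀ x y : Γ ⧸ Hn, f₀ x = f₀ y) →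
          inner ℂ f₀ f = (0 : ℂ)) ∧
        ∀ g ∈ Qn n, ‖permL2 g f - f‖ < ((n:ℝ)+1)⁻¹ * ‖f‖ := by
    intro n
    exact hτ (Qn n) ((n:ℝ)+1)⁻¹ (by positivity)
  choose H hHfi f hforth hfsmall using hsel
  haveI instF : ∀ n, Fintype (Γ ⧸ H n) := fun n => by
    haveI := hHfi n
    exact Fintype.ofFinite _
  set fn : ∀ n, (Γ ⧸ H n) → ℂ := fun n => ⇑(f n) with hfn
  have h2t : ((2:ℝ≥0∞)).toReal = (2:ℝ) := by simp
  -- the coordinates of permL2 differences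
  have hcoord : ∀ n (g : Γ) (x : Γ ⧸ H n),
      (permL2 g (f n) - f n : lp (fun _ : Γ ⧸ H n => ℂ) 2) x = fn n (g⁻¹ • x) - fn n x := by
    intro n g x
    rw [lp.coeFn_sub, Pi.sub_apply]
    congr 1
    show (1:ℂ) * fn n (g⁻¹ • x) = fn n (g⁻¹ • x)
    rw [one_mul]
  -- nonvanishing of f n
  have hfpos : ∀ n, 0 < ‖f n‖ := by
    intro n
    have h1 := hfsmall n 1 (Finset.mem_insert_self 1 _)
    have h2 : permL2 (1:Γ) (f n) = f n := by
      apply lp.ext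
      funext x
      show (1:ℂ) * fn n ((1:Γ)⁻¹ • x) = fn n x
      rw [inv_one, one_smul, one_mul]
    rw [h2, sub_self, norm_zero] at h1
    by_contra hc
    push_neg at hc
    have : ‖f n‖ = 0 := le_antisymm hc (norm_nonneg _)
    rw [this, mul_zero] at h1
    exact lt_irrefl _ h1
  -- mean zero
  have hsum0 : ∀ n, (∑ d, fn n d) = 0 := by
    intro n
    have hmem : Memℓp (fun _ : Γ ⧸ H n => (1:ℂ)) 2 := by
      apply memℓp_gen
      exact Summable.of_finite
    have h1 := hforth n ⟨fun _ => (1:ℂ), hmem⟩ (fun x y => rfl)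
    rw [lp.inner_eq_tsum] at h1
    have h2 : ∀ x : Γ ⧸ H n, (inner ℂ ((⟨fun _ => (1:ℂ), hmem⟩ : lp (fun _ : Γ ⧸ H n => ℂ) 2) x)
        ((f n) x) : ℂ) = fn n x := by
      intro x
      rw [RCLike.inner_apply]
      show fn n x * (starRingEnd ℂ) 1 = fn n x
      rw [map_one, mul_one]
    rw [tsum_congr h2, tsum_fintype] at h1
    exact h1
  -- positive ℓ₂ mass
  have hmass : ∀ n, (∑ d, ‖fn n d‖ ^ (2:ℝ)) = ‖f n‖ ^ (2:ℝ) := by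
    intro n
    have := lp.norm_rpow_eq_tsum (p := 2) (by rw [h2t]; norm_num) (f n)
    rw [h2t] at this
    rw [this, tsum_fintype]
  have hpos : ∀ n, 0 < ∑ d, ‖fn n d‖ ^ (2:ℝ) := by
    intro n
    rw [hmass n]
    exact Real.rpow_pos_of_pos (hfpos n) _
  -- the ℓ₂ increment bound
  have hdiffb : ∀ n, ∀ g ∈ Qn n, (∑ d, ‖fn n (g⁻¹ • d) - fn n d‖ ^ (2:ℝ)) <
      (((n:ℝ)+1)⁻¹) ^ (2:ℝ) * ∑ d, ‖fn n d‖ ^ (2:ℝ) := by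
    intro n g hg
    have h1 := hfsmall n g hg
    have h2 : ‖permL2 g (f n) - f n‖ ^ (2:ℝ) < (((n:ℝ)+1)⁻¹ * ‖f n‖) ^ (2:ℝ) := by
      apply Real.rpow_lt_rpow (norm_nonneg _) h1 (by norm_num)
    have h3 : ‖permL2 g (f n) - f n‖ ^ (2:ℝ) = ∑ d, ‖fn n (g⁻¹ • d) - fn n d‖ ^ (2:ℝ) := by
      have h3' := lp.norm_rpow_eq_tsum (p := 2) (by rw [h2t]; norm_num) (permL2 g (f n) - f n)
      rw [h2t, tsum_fintype] at h3'
      rw [h3']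
      exact Finset.sum_congr rfl fun d _ => by rw [hcoord]
    have h5 : (((n:ℝ)+1)⁻¹ * ‖f n‖) ^ (2:ℝ) =
        (((n:ℝ)+1)⁻¹) ^ (2:ℝ) * ‖f n‖ ^ (2:ℝ) :=
      Real.mul_rpow (by positivity) (norm_nonneg _)
    rw [h3, h5, ← hmass n] at h2
    exact h2
  -- apply the master lemma
  obtain ⟨K, θ, hK, hθ, hmaster⟩ := master hp1
  have hyn : ∀ n, ∃ y : (Γ ⧸ H n) → ℝ, (∑ d, y d) = 0 ∧ (∑ d, |y d| ^ p) = 1 ∧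
      ∀ σ : Equiv.Perm (Γ ⧸ H n), (∑ d, |y (σ d) - y d| ^ p) ≤
        K * ((∑ d, ‖fn n (σ d) - fn n d‖ ^ (2:ℝ)) / (∑ d, ‖fn n d‖ ^ (2:ℝ))) ^ θ :=
    fun n => hmaster (Γ ⧸ H n) (instF n) ⟨((1 : Γ) : Γ ⧸ H n)⟩ (fn n) (hsum0 n) (hpos n)
  choose y hy0 hy1 hyb using hyn
  -- the index equivalence
  haveI : Infinite (Σ k, Γ ⧸ H k) :=
    Infinite.of_injective (fun n => (⟨n, ((1 : Γ) : Γ ⧸ H n)⟩ : Σ k, Γ ⧸ H k))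
      (fun a b hab => congrArg Sigma.fst hab)
  haveI : Encodable (Σ k, Γ ⧸ H k) := Encodable.ofCountable _
  haveI : Denumerable (Σ k, Γ ⧸ H k) := Denumerable.ofEncodableOfInfinite _
  set e : (Σ k, Γ ⧸ H k) ≃ ℕ := Denumerable.eqv _ with he
  -- the representation
  haveI hfact : Fact (1 ≤ ENNReal.ofReal p) := ⟨ENNReal.one_le_ofReal.mpr hp1.le⟩
  have hpteq : (ENNReal.ofReal p).toReal = p := ENNReal.toReal_ofReal (by linarith)
  have hpt : 0 < (ENNReal.ofReal p).toReal := by rw [hpteq]; linarith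
  apply hT (permRep (H := H) e hpt)
  refine ⟨fun n => mkLp e hpt n (fun d => (y n d : ℂ)), ?_, ?_, ?_⟩
  · -- annihilator membership
    intro n φ hφ
    have hconst : ∀ d d' : Γ ⧸ H n, φ (e ⟨n, d'⟩) = φ (e ⟨n, d⟩) := by
      intro d d'
      obtain ⟨g, hg⟩ := MulAction.exists_smul_eq Γ d d'
      set u : Γ ⧸ H n → ℂ := fun d'' => if d'' = d' then 1 else 0 with hu
      have h1 := hφ.2 g⁻¹ (mkLp e hpt n u)
      rw [permRep_mkLp, dualPair_mkLp, dualPair_mkLp] at h1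
      have h2 : ∀ d'' : Γ ⧸ H n, u (g⁻¹⁻¹ • d'') = if d'' = d then 1 else 0 := by
        intro d''
        rw [inv_inv, hu]
        have : (g • d'' = d') ↔ (d'' = d) := by
          constructor
          · intro hh
            rw [← hg] at hh
            exact smul_left_cancel g hh
          · intro hh
            rw [hh, hg]
        simp only [this]
      rw [Finset.sum_congr rfl (fun d'' _ => by rw [h2 d''])] at h1
      have h3 : (∑ d'' : Γ ⧸ H n, φ (e ⟨n, d''⟩) * if d'' = d then 1 else 0) = φ (e ⟨n, d⟩) := by
        rw [Finset.sum_congr rfl (fun d'' _ => by rw [mul_ite, mul_one, mul_zero]),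
          Finset.sum_ite_eq' Finset.univ d (fun d'' => φ (e ⟨n, d''⟩))]
        simp
      have h4 : (∑ d'' : Γ ⧸ H n, φ (e ⟨n, d''⟩) * u d'') = φ (e ⟨n, d'⟩) := by
        rw [hu]
        rw [Finset.sum_congr rfl (fun d'' _ => by rw [mul_ite, mul_one, mul_zero]),
          Finset.sum_ite_eq' Finset.univ d' (fun d'' => φ (e ⟨n, d''⟩))]
        simp
      rw [h3, h4] at h1
      exact h1.symm
    show dualPair φ _ = 0
    rw [dualPair_mkLp]
    have h5 : (∑ d, φ (e ⟨n, d⟩) * (y n d : ℂ)) =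
        φ (e ⟨n, ((1 : Γ) : Γ ⧸ H n)⟩) * ∑ d, ((y n d : ℝ) : ℂ) := by
      rw [Finset.mul_sum]
      exact Finset.sum_congr rfl fun d _ => by rw [hconst ((1 : Γ) : Γ ⧸ H n) d]
    rw [h5, ← Complex.ofReal_sum, hy0 n]
    simp
  · -- unit norms
    intro n
    apply rpow_cancel (norm_nonneg _) (by norm_num) hpt.ne'
    rw [norm_mkLp, Real.one_rpow]
    rw [← hy1 n]
    apply Finset.sum_congr rfl
    intro d _
    rw [hpteq, Complex.norm_real, Real.norm_eq_abs]
  · -- almost invariance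
    intro Q hQ ε hε
    have hQfin : Q.Finite := hQ.finite_of_discrete
    set kk : Γ → ℕ := Function.surjInv he₀ with hkk
    set N₁ := hQfin.toFinset.sup kk with hN₁
    have hQsub : ∀ n, N₁ ≤ n → ∀ g ∈ Q, g ∈ Qn n := by
      intro n hn g hg
      apply Finset.mem_insert_of_mem
      apply Finset.mem_image.mpr
      refine ⟨kk g, ?_, Function.surjInv_eq he₀ g⟩
      apply Finset.mem_range.mpr
      have : kk g ≤ N₁ := Finset.le_sup (hQfin.mem_toFinset.mpr hg)
      omega
    -- the bound sequence
    set b : ℕ → ℝ := fun n => (K * ((((n:ℝ)+1)⁻¹) ^ (2:ℝ)) ^ θ) ^ p⁻¹ with hb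
    have hb0 : Tendsto b atTop (nhds 0) := by
      have t1 : Tendsto (fun n : ℕ => ((n:ℝ)+1)⁻¹) atTop (nhds 0) := by
        simpa only [one_div] using tendsto_one_div_add_atTop_nhds_zero_nat (𝕜 := ℝ)
      have t2 : Tendsto (fun n : ℕ => (((n:ℝ)+1)⁻¹) ^ (2:ℝ)) atTop (nhds 0) := by
        have := t1.rpow_const (p := (2:ℝ)) (Or.inr (by norm_num))
        simpa [Real.zero_rpow (by norm_num : (2:ℝ) ≠ 0)] using this
      have t3 : Tendsto (fun n : ℕ => ((((n:ℝ)+1)⁻¹) ^ (2:ℝ)) ^ θ) atTop (nhds 0) := by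
        have := t2.rpow_const (p := θ) (Or.inr hθ.le)
        simpa [Real.zero_rpow hθ.ne'] using this
      have t4 : Tendsto (fun n : ℕ => K * ((((n:ℝ)+1)⁻¹) ^ (2:ℝ)) ^ θ) atTop (nhds 0) := by
        have := t3.const_mul K
        simpa using this
      have t5 := t4.rpow_const (p := p⁻¹) (Or.inr (by positivity))
      rw [show ((0:ℝ) ^ p⁻¹) = 0 from Real.zero_rpow (by positivity)] at t5
      exact t5
    have hev := hb0.eventually_lt_const hε
    rw [Filter.eventually_atTop] at hev
    obtain ⟨N₂, hN₂⟩ := hev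
    refine ⟨max N₁ N₂, ?_⟩
    intro n hn g hg
    have hg' : g ∈ Qn n := hQsub n (le_trans (le_max_left _ _) hn) g hg
    -- the permutation σ
    set σ : Equiv.Perm (Γ ⧸ H n) := MulAction.toPerm (g⁻¹ : Γ) with hσ
    have hσap : ∀ d : Γ ⧸ H n, σ d = g⁻¹ • d := fun d => rfl
    have hbd := hyb n σ
    have hrat : ((∑ d, ‖fn n (σ d) - fn n d‖ ^ (2:ℝ)) / (∑ d, ‖fn n d‖ ^ (2:ℝ))) ≤
        (((n:ℝ)+1)⁻¹) ^ (2:ℝ) := by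
      rw [div_le_iff₀ (hpos n)]
      have := hdiffb n g hg'
      calc (∑ d, ‖fn n (σ d) - fn n d‖ ^ (2:ℝ))
          = ∑ d, ‖fn n (g⁻¹ • d) - fn n d‖ ^ (2:ℝ) :=
            Finset.sum_congr rfl fun d _ => by rw [hσap]
      _ ≤ (((n:ℝ)+1)⁻¹) ^ (2:ℝ) * ∑ d, ‖fn n d‖ ^ (2:ℝ) := (hdiffb n g hg').le
    have hratnn : 0 ≤ ((∑ d, ‖fn n (σ d) - fn n d‖ ^ (2:ℝ)) / (∑ d, ‖fn n d‖ ^ (2:ℝ))) := by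
      apply div_nonneg _ (hpos n).le
      exact Finset.sum_nonneg fun d _ => Real.rpow_nonneg (norm_nonneg _) _
    have hsump : (∑ d, |y n (σ d) - y n d| ^ p) ≤ K * ((((n:ℝ)+1)⁻¹) ^ (2:ℝ)) ^ θ := by
      refine hbd.trans ?_
      have := Real.rpow_le_rpow hratnn hrat hθ.le
      nlinarith
    -- translate to the lp norm
    have hdiff : (permRep (H := H) e hpt).toFun g (mkLp e hpt n (fun d => (y n d : ℂ))) -
        mkLp e hpt n (fun d => (y n d : ℂ)) =
        mkLp e hpt n (fun d => ((y n (g⁻¹ • d) : ℂ) - (y n d : ℂ))) := by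
      rw [permRep_mkLp, mkLp_sub]
    have hnormp : ‖(permRep (H := H) e hpt).toFun g (mkLp e hpt n (fun d => (y n d : ℂ))) -
        mkLp e hpt n (fun d => (y n d : ℂ))‖ ^ p ≤ K * ((((n:ℝ)+1)⁻¹) ^ (2:ℝ)) ^ θ := by
      have hn1 := norm_mkLp e hpt n (fun d => ((y n (g⁻¹ • d) : ℂ) - (y n d : ℂ)))
      rw [hpteq] at hn1
      rw [hdiff, hn1]
      refine le_trans (le_of_eq ?_) hsump
      apply Finset.sum_congr rfl
      intro d _
      rw [← Complex.ofReal_sub, Complex.norm_real, Real.norm_eq_abs, hσap]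
    -- conclude
    have hb_lt : b n < ε := hN₂ n (le_trans (le_max_right _ _) hn)
    have hnn : (0:ℝ) ≤ ‖(permRep (H := H) e hpt).toFun g (mkLp e hpt n (fun d => (y n d : ℂ))) -
        mkLp e hpt n (fun d => (y n d : ℂ))‖ := norm_nonneg _
    have hfin : ‖(permRep (H := H) e hpt).toFun g (mkLp e hpt n (fun d => (y n d : ℂ))) -
        mkLp e hpt n (fun d => (y n d : ℂ))‖ ≤ b n := by
      have h1 : (‖(permRep (H := H) e hpt).toFun g (mkLp e hpt n (fun d => (y n d : ℂ))) -
          mkLp e hpt n (fun d => (y n d : ℂ))‖ ^ p) ^ p⁻¹ ≤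
          (K * ((((n:ℝ)+1)⁻¹) ^ (2:ℝ)) ^ θ) ^ p⁻¹ :=
        Real.rpow_le_rpow (Real.rpow_nonneg hnn _) hnormp (by positivity)
      rwa [Real.rpow_rpow_inv hnn (by positivity : p ≠ 0)] at h1
    exact lt_of_le_of_lt hfin hb_lt

end
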